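/- For integers k ≥ 2 let ξ_k = k^{−1/2}, δ_k = ξ_k − ξ_{k+1}, and let θ_k ∈ (0, π/2) be defined by sin(θ_k/2) = (√2/2) sin(δ_k/2). Define g_k = sin(θ_k/2)cos(θ_{k−1}/2) + cos(θ_k/2)sin(θ_{k−1}/2) and f_k = √2( cos(δ_k/2)cos(θ_{k−1}/2) − cos(θ_k/2)cos(δ_{k−1}/2) ), and let σ_k = arcsin( f_k / √(g_k² + f_k²) ). Then σ_k = b_k k^{−5/2} where b_k → 3/16 as k → ∞; equivalently, k^{5/2} σ_k → 3/16. -/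

import Mathlib

open Real Filter

set_option maxHeartbeats 1000000

lemma slope_lim {F : ℝ → ℝ} {d : ℝ} (hF : HasDerivAt F d 0) (hF0 : F 0 = 0)
    {z : ℕ → ℝ} (hz : Tendsto z atTop (nhds 0)) (hz' : ∀ᶠ k in atTop, z k ≠ 0) :
    Tendsto (fun k => F (z k) / z k) atTop (nhds d) := by
  have h := hasDerivAt_iff_tendsto_slope.mp hF
  have hzz : Tendsto z atTop (nhdsWithin 0 {0}ᶜ) := by
    rw [tendsto_nhdsWithin_iff]
    exact ⟨hz, hz'⟩
  have := h.comp hzz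
  refine this.congr fun k => ?_
  simp [slope_def_field, hF0]

lemma sinc_lim {z : ℕ → ℝ} (hz : Tendsto z atTop (nhds 0)) (hz' : ∀ᶠ k in atTop, z k ≠ 0) :
    Tendsto (fun k => Real.sin (z k) / z k) atTop (nhds 1) := by
  simpa using slope_lim (Real.hasDerivAt_sin 0) (by simp) hz hz'

lemma arcsinc_lim {z : ℕ → ℝ} (hz : Tendsto z atTop (nhds 0)) (hz' : ∀ᶠ k in atTop, z k ≠ 0) :
    Tendsto (fun k => Real.arcsin (z k) / z k) atTop (nhds 1) := by
  simpa using slope_lim (Real.hasDerivAt_arcsin (by norm_num) (by norm_num)) (by simp) hz hz'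

lemma sqrt_shift_up {K : ℝ} (hK : 1 ≤ K) :
    Real.sqrt (K+1) = Real.sqrt K * Real.sqrt (1+1/K) := by
  rw [← Real.sqrt_mul (by linarith)]
  congr 1
  field_simp

lemma sqrt_shift_down {K : ℝ} (hK : 1 ≤ K) :
    Real.sqrt (K-1) = Real.sqrt K * Real.sqrt (1-1/K) := by
  rw [← Real.sqrt_mul (by linarith)]
  congr 1
  field_simp

lemma idA {K : ℝ} (hK : 2 ≤ K) :
    (1/Real.sqrt K - 1/Real.sqrt (K+1)) * (K*Real.sqrt K)
      = 1/(Real.sqrt (1+1/K)*(Real.sqrt (1+1/K)+1)) := by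
  have hK0 : (0:ℝ) < K := by linarith
  rw [sqrt_shift_up (by linarith)]
  set b := Real.sqrt K with hbdef
  set p := Real.sqrt (1+1/K) with hpdef
  have hb2 : b^2 = K := Real.sq_sqrt hK0.le
  have hp2 : p^2 = 1+1/K := Real.sq_sqrt (by positivity)
  have hb : 0 < b := Real.sqrt_pos.mpr hK0
  have hp : 0 < p := Real.sqrt_pos.mpr (by positivity)
  have hp2' : K * p^2 = K + 1 := by rw [hp2]; field_simp
  field_simp
  linear_combination hp2'

lemma idA' {K : ℝ} (hK : 2 ≤ K) :
    (1/Real.sqrt (K-1) - 1/Real.sqrt K) * (K*Real.sqrt K)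
      = 1/(Real.sqrt (1-1/K)*(Real.sqrt (1-1/K)+1)) := by
  have hK0 : (0:ℝ) < K := by linarith
  rw [sqrt_shift_down (by linarith)]
  set b := Real.sqrt K with hbdef
  set q := Real.sqrt (1-1/K) with hqdef
  have hb2 : b^2 = K := Real.sq_sqrt hK0.le
  have hq2 : q^2 = 1-1/K := Real.sq_sqrt (by rw [sub_nonneg]; rw [div_le_one hK0]; linarith)
  have hb : 0 < b := Real.sqrt_pos.mpr hK0
  have hq : 0 < q := Real.sqrt_pos.mpr (by rw [sub_pos, div_lt_one hK0]; linarith)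
  have hq2' : K * q^2 = K - 1 := by rw [hq2]; field_simp
  field_simp
  linear_combination -hq2'

lemma key_id {x : ℝ} (hx0 : 0 < x) (hx1 : x < 1) :
    1/Real.sqrt (1+x) + 1/Real.sqrt (1-x) - 2 =
      x^2 * (2*(2*Real.sqrt (1-x^2)+1) /
        (Real.sqrt (1-x^2)*(Real.sqrt (1-x^2)+1)*(Real.sqrt (1+x)+Real.sqrt (1-x)+2*Real.sqrt (1-x^2)))) := by
  have h1x : (0:ℝ) ≤ 1 + x := by linarith
  have h1x' : (0:ℝ) ≤ 1 - x := by linarith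
  set p := Real.sqrt (1+x) with hpdef
  set q := Real.sqrt (1-x) with hqdef
  have hp2 : p^2 = 1+x := Real.sq_sqrt h1x
  have hq2 : q^2 = 1-x := Real.sq_sqrt h1x'
  have hp : 0 < p := Real.sqrt_pos.mpr (by linarith)
  have hq : 0 < q := Real.sqrt_pos.mpr (by linarith)
  have hr : Real.sqrt (1-x^2) = p*q := by
    rw [show (1:ℝ)-x^2 = (1+x)*(1-x) by ring, Real.sqrt_mul h1x]
  rw [hr]
  have hr2 : (p*q)^2 = 1 - x^2 := by rw [mul_pow, hp2, hq2]; ring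
  have hs : (p+q)^2 = 2 + 2*(p*q) := by rw [add_sq, hp2, hq2]; ring
  have key : (p + q - 2*(p*q)) * (((p*q)+1)*(p+q+2*(p*q))) = x^2*(2*(2*(p*q)+1)) := by
    linear_combination ((p*q)+1)*hs - 2*(2*(p*q)+1)*hr2
  have hr0 : 0 < p*q := mul_pos hp hq
  have hd0 : 0 < p+q+2*(p*q) := by positivity
  field_simp
  linear_combination key

lemma idB {K : ℝ} (hK : 2 ≤ K) :
    (1/Real.sqrt (K-1) - 2/Real.sqrt K + 1/Real.sqrt (K+1)) * (K^2*Real.sqrt K)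
      = 2*(2*Real.sqrt (1-(1/K)^2)+1) /
        (Real.sqrt (1-(1/K)^2)*(Real.sqrt (1-(1/K)^2)+1)*(Real.sqrt (1+1/K)+Real.sqrt (1-1/K)+2*Real.sqrt (1-(1/K)^2))) := by
  have hK0 : (0:ℝ) < K := by linarith
  have hx0 : 0 < 1/K := by positivity
  have hx1 : 1/K < 1 := by rw [div_lt_one hK0]; linarith
  have hkey := key_id hx0 hx1
  rw [sqrt_shift_down (by linarith), sqrt_shift_up (by linarith)]
  set b := Real.sqrt K with hbdef
  set p := Real.sqrt (1+1/K) with hpdef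
  set q := Real.sqrt (1-1/K) with hqdef
  have hb : 0 < b := Real.sqrt_pos.mpr hK0
  have hp : 0 < p := Real.sqrt_pos.mpr (by positivity)
  have hq : 0 < q := Real.sqrt_pos.mpr (by rw [sub_pos]; exact hx1)
  have hb2 : b^2 = K := Real.sq_sqrt hK0.le
  -- rewrite RHS using hkey
  have hF : (2*(2*Real.sqrt (1-(1/K)^2)+1) /
        (Real.sqrt (1-(1/K)^2)*(Real.sqrt (1-(1/K)^2)+1)*(p+q+2*Real.sqrt (1-(1/K)^2))))
      = K^2*(1/p + 1/q - 2) := by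
    rw [hkey]
    field_simp
  rw [hF]
  field_simp
  ring

lemma mono_ineq {K : ℝ} (hK : 2 ≤ K) :
    1/Real.sqrt K - 1/Real.sqrt (K+1) < 1/Real.sqrt (K-1) - 1/Real.sqrt K := by
  have hK0 : (0:ℝ) < K := by linarith
  set a := Real.sqrt (K-1) with hadef
  set b := Real.sqrt K with hbdef
  set c := Real.sqrt (K+1) with hcdef
  have ha : 0 < a := Real.sqrt_pos.mpr (by linarith)
  have hb : 0 < b := Real.sqrt_pos.mpr hK0
  have hc : 0 < c := Real.sqrt_pos.mpr (by linarith)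
  have ha2 : a^2 = K-1 := Real.sq_sqrt (by linarith)
  have hb2 : b^2 = K := Real.sq_sqrt hK0.le
  have hc2 : c^2 = K+1 := Real.sq_sqrt (by linarith)
  have hac2 : (a*c)^2 = K^2-1 := by rw [mul_pow, ha2, hc2]; ring
  have hac : 0 < a*c := mul_pos ha hc
  have h2 : K^2 - 2 < K*(a*c) := by nlinarith [mul_pos (mul_pos hK0 hac) (mul_pos hK0 hac)]
  have key : 2*(a*c) < b*(a+c) := by nlinarith [mul_pos hb (add_pos ha hc), mul_pos hK0 hac]
  have h4 : 1/b - 1/c = (c-b)/(b*c) := by field_simp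
  have h5 : 1/a - 1/b = (b-a)/(a*b) := by field_simp
  rw [h4, h5, div_lt_div_iff₀ (by positivity) (by positivity)]
  nlinarith [key, ha2, hb2, hc2]

lemma limA : Tendsto (fun k : ℕ => (1/Real.sqrt (k:ℝ) - 1/Real.sqrt ((k:ℝ)+1)) * ((k:ℝ)*Real.sqrt (k:ℝ)))
    atTop (nhds (1/2)) := by
  have hcont : ContinuousAt (fun x : ℝ => 1/(Real.sqrt (1+x)*(Real.sqrt (1+x)+1))) 0 := by
    apply ContinuousAt.div continuousAt_const (by fun_prop)
    norm_num
  have hlim := hcont.tendsto.comp tendsto_one_div_atTop_nhds_zero_nat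
  norm_num at hlim
  apply hlim.congr'
  filter_upwards [eventually_ge_atTop 2] with k hk
  have hK : (2:ℝ) ≤ (k:ℝ) := by exact_mod_cast hk
  simpa using (idA hK).symm

lemma limA' : Tendsto (fun k : ℕ => (1/Real.sqrt ((k:ℝ)-1) - 1/Real.sqrt (k:ℝ)) * ((k:ℝ)*Real.sqrt (k:ℝ)))
    atTop (nhds (1/2)) := by
  have hcont : ContinuousAt (fun x : ℝ => 1/(Real.sqrt (1-x)*(Real.sqrt (1-x)+1))) 0 := by
    apply ContinuousAt.div continuousAt_const (by fun_prop)
    norm_num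
  have hlim := hcont.tendsto.comp tendsto_one_div_atTop_nhds_zero_nat
  norm_num at hlim
  apply hlim.congr'
  filter_upwards [eventually_ge_atTop 2] with k hk
  have hK : (2:ℝ) ≤ (k:ℝ) := by exact_mod_cast hk
  simpa using (idA' hK).symm

lemma limB : Tendsto (fun k : ℕ => (1/Real.sqrt ((k:ℝ)-1) - 2/Real.sqrt (k:ℝ) + 1/Real.sqrt ((k:ℝ)+1)) * ((k:ℝ)^2*Real.sqrt (k:ℝ)))
    atTop (nhds (3/4)) := by
  have hcont : ContinuousAt (fun x : ℝ => 2*(2*Real.sqrt (1-x^2)+1) /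
        (Real.sqrt (1-x^2)*(Real.sqrt (1-x^2)+1)*(Real.sqrt (1+x)+Real.sqrt (1-x)+2*Real.sqrt (1-x^2)))) 0 := by
    apply ContinuousAt.div (by fun_prop) (by fun_prop)
    norm_num
  have hlim := hcont.tendsto.comp tendsto_one_div_atTop_nhds_zero_nat
  norm_num at hlim
  apply hlim.congr'
  filter_upwards [eventually_ge_atTop 2] with k hk
  have hK : (2:ℝ) ≤ (k:ℝ) := by exact_mod_cast hk
  simpa using (idB hK).symm

lemma cancel1 {a b M : ℝ} (hb : b ≠ 0) : a/b*(b*M) = a*M := by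
  field_simp

lemma cancel2 {c d P Q sP sQ M1 M2 : ℝ} (hP : P ≠ 0) (hQ : Q ≠ 0) (hd : d ≠ 0) :
    c/d * (sP/P) * (sQ/Q) * ((P*M1)*(Q*M2)) = c*(sP*sQ)/d*(M1*M2) := by
  field_simp

noncomputable section

/-- Asymptotics of the oriented angle `σ_k` between the inward normal of the unit circle and
the normal of the constructed curve at `q_k`: with `sin σ_k = f_k/√(g_k² + f_k²)` one has
`σ_k = b_k k^{-5/2}` with `b_k → 3/16`, i.e. `k^{5/2} σ_k → 3/16`. -/
theorem stmt_12 (ξ δ θ g f σ : ℕ → ℝ)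
    (hξ : ∀ k : ℕ, ξ k = (k : ℝ) ^ (-(1 : ℝ) / 2))
    (hδ : ∀ k : ℕ, δ k = ξ k - ξ (k + 1))
    (hθmem : ∀ k : ℕ, 1 ≤ k → θ k ∈ Set.Ioo 0 (π / 2))
    (hθ : ∀ k : ℕ, 1 ≤ k → Real.sin (θ k / 2) = Real.sqrt 2 / 2 * Real.sin (δ k / 2))
    (hg : ∀ k : ℕ, 2 ≤ k → g k =
      Real.sin (θ k / 2) * Real.cos (θ (k - 1) / 2) +
        Real.cos (θ k / 2) * Real.sin (θ (k - 1) / 2))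
    (hf : ∀ k : ℕ, 2 ≤ k → f k =
      Real.sqrt 2 * (Real.cos (δ k / 2) * Real.cos (θ (k - 1) / 2) -
        Real.cos (θ k / 2) * Real.cos (δ (k - 1) / 2)))
    (hσ : ∀ k : ℕ, 2 ≤ k → σ k = Real.arcsin (f k / Real.sqrt (g k ^ 2 + f k ^ 2))) :
    Tendsto (fun k : ℕ => (k : ℝ) ^ ((5 : ℝ) / 2) * σ k) atTop (nhds (3 / 16)) := by
  -- δ in sqrt form
  have hδs : ∀ k : ℕ, 1 ≤ k → δ k = 1/Real.sqrt (k:ℝ) - 1/Real.sqrt ((k:ℝ)+1) := by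
    intro k hk
    have hk0 : (0:ℝ) < (k:ℝ) := by exact_mod_cast hk
    rw [hδ, hξ, hξ]
    push_cast
    rw [neg_div, Real.rpow_neg (by positivity), Real.rpow_neg (by positivity),
      ← Real.sqrt_eq_rpow, ← Real.sqrt_eq_rpow, one_div, one_div]
  have hδs' : ∀ k : ℕ, 2 ≤ k → δ (k-1) = 1/Real.sqrt ((k:ℝ)-1) - 1/Real.sqrt (k:ℝ) := by
    intro k hk
    have h1 : 1 ≤ k - 1 := by omega
    rw [hδs (k-1) h1]
    have hc : ((k-1 : ℕ) : ℝ) = (k:ℝ) - 1 := by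
      rw [Nat.cast_sub (by omega), Nat.cast_one]
    rw [hc, show (k:ℝ)-1+1 = (k:ℝ) by ring]
  have hδpos : ∀ k : ℕ, 1 ≤ k → 0 < δ k := by
    intro k hk
    have hk1 : (1:ℝ) ≤ (k:ℝ) := by exact_mod_cast hk
    rw [hδs k hk, sub_pos]
    apply one_div_lt_one_div_of_lt (Real.sqrt_pos.mpr (by linarith))
    exact Real.sqrt_lt_sqrt (by positivity) (by linarith)
  have hδlt1 : ∀ k : ℕ, 1 ≤ k → δ k < 1 := by
    intro k hk
    have hk1 : (1:ℝ) ≤ (k:ℝ) := by exact_mod_cast hk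
    rw [hδs k hk]
    have hs1 : (1:ℝ) ≤ Real.sqrt (k:ℝ) := by
      rw [show (1:ℝ) = Real.sqrt 1 from (Real.sqrt_one).symm]
      exact Real.sqrt_le_sqrt hk1
    have h1 : 1/Real.sqrt (k:ℝ) ≤ 1 := by
      rw [div_le_one (by linarith)]; linarith
    have h2 : 0 < 1/Real.sqrt ((k:ℝ)+1) := by positivity
    linarith
  have hKfacts : ∀ k : ℕ, 2 ≤ k → 0 < δ k ∧ δ k < δ (k-1) ∧ δ (k-1) < 1 := by
    intro k hk
    have h1 : 1 ≤ k := by omega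
    have h1' : 1 ≤ k - 1 := by omega
    have hK : (2:ℝ) ≤ (k:ℝ) := by exact_mod_cast hk
    refine ⟨hδpos k h1, ?_, hδlt1 (k-1) h1'⟩
    rw [hδs k h1, hδs' k hk]
    exact mono_ineq hK
  -- limits of δ, θ
  have hξ0 : Tendsto ξ atTop (nhds 0) := by
    have h : Tendsto (fun x : ℝ => x ^ (-(1:ℝ)/2)) atTop (nhds 0) := by
      rw [show (-(1:ℝ)/2) = -(1/2) by norm_num]
      exact tendsto_rpow_neg_atTop (by norm_num)
    have h2 := h.comp tendsto_natCast_atTop_atTop (α := ℕ)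
    exact h2.congr fun k => (hξ k).symm
  have hξs : Tendsto (fun k : ℕ => ξ (k+1)) atTop (nhds 0) := (tendsto_add_atTop_iff_nat 1).mpr hξ0
  have hδ0 : Tendsto δ atTop (nhds 0) := by
    have h := hξ0.sub hξs
    norm_num at h
    exact h.congr fun k => (hδ k).symm
  have hδ0' : Tendsto (fun k : ℕ => δ (k-1)) atTop (nhds 0) := by
    rw [← tendsto_add_atTop_iff_nat 1]
    simpa using hδ0
  have hθid : ∀ k : ℕ, 1 ≤ k → θ k = 2*Real.arcsin (Real.sqrt 2/2 * Real.sin (δ k/2)) := by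
    intro k hk
    obtain ⟨h1, h2⟩ := hθmem k hk
    have hpi : (0:ℝ) < π := pi_pos
    rw [← hθ k hk, Real.arcsin_sin (by linarith) (by linarith)]
    ring
  have hθ0 : Tendsto θ atTop (nhds 0) := by
    have hc : Continuous (fun r : ℝ => 2*Real.arcsin (Real.sqrt 2/2 * Real.sin (r/2))) :=
      continuous_const.mul (Real.continuous_arcsin.comp (by fun_prop))
    have h := (hc.tendsto 0).comp hδ0
    norm_num at h
    apply h.congr'
    filter_upwards [eventually_ge_atTop 1] with k hk
    exact (hθid k hk).symm
  have hθ0' : Tendsto (fun k : ℕ => θ (k-1)) atTop (nhds 0) := by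
    rw [← tendsto_add_atTop_iff_nat 1]
    simpa using hθ0
  -- scaled limits
  have L1 : Tendsto (fun k : ℕ => δ k * ((k:ℝ)*Real.sqrt (k:ℝ))) atTop (nhds (1/2)) := by
    apply limA.congr'
    filter_upwards [eventually_ge_atTop 1] with k hk
    rw [hδs k hk]
  have L2 : Tendsto (fun k : ℕ => δ (k-1) * ((k:ℝ)*Real.sqrt (k:ℝ))) atTop (nhds (1/2)) := by
    apply limA'.congr'
    filter_upwards [eventually_ge_atTop 2] with k hk
    rw [hδs' k hk]
  have L3 : Tendsto (fun k : ℕ => (δ (k-1) - δ k) * ((k:ℝ)^2*Real.sqrt (k:ℝ))) atTop (nhds (3/4)) := by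
    apply limB.congr'
    filter_upwards [eventually_ge_atTop 2] with k hk
    rw [hδs' k hk, hδs k (by omega)]
    ring
  -- sinc limits for the small angles
  have hpi3 : (3:ℝ) < π := pi_gt_three
  have hδne : ∀ᶠ k in atTop, δ k / 2 ≠ 0 := by
    filter_upwards [eventually_ge_atTop 1] with k hk
    have := hδpos k hk; positivity
  have hδne' : ∀ᶠ k in atTop, δ (k-1) / 2 ≠ 0 := by
    filter_upwards [eventually_ge_atTop 2] with k hk
    have := hδpos (k-1) (by omega); positivity
  have hθne : ∀ᶠ k in atTop, θ k / 2 ≠ 0 := by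
    filter_upwards [eventually_ge_atTop 1] with k hk
    have := (hθmem k hk).1; positivity
  have hθne' : ∀ᶠ k in atTop, θ (k-1) / 2 ≠ 0 := by
    filter_upwards [eventually_ge_atTop 2] with k hk
    have := (hθmem (k-1) (by omega)).1; positivity
  have hδh : Tendsto (fun k : ℕ => δ k / 2) atTop (nhds 0) := by
    simpa using hδ0.div_const 2
  have hδh' : Tendsto (fun k : ℕ => δ (k-1) / 2) atTop (nhds 0) := by
    simpa using hδ0'.div_const 2
  have hθh : Tendsto (fun k : ℕ => θ k / 2) atTop (nhds 0) := by
    simpa using hθ0.div_const 2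
  have hθh' : Tendsto (fun k : ℕ => θ (k-1) / 2) atTop (nhds 0) := by
    simpa using hθ0'.div_const 2
  have Asin : Tendsto (fun k : ℕ => Real.sin (δ k/2) / (δ k/2)) atTop (nhds 1) :=
    sinc_lim hδh hδne
  have Bsin : Tendsto (fun k : ℕ => Real.sin (δ (k-1)/2) / (δ (k-1)/2)) atTop (nhds 1) :=
    sinc_lim hδh' hδne'
  have Tsin : Tendsto (fun k : ℕ => (θ k/2) / Real.sin (θ k/2)) atTop (nhds 1) := by
    have h := (sinc_lim hθh hθne).inv₀ one_ne_zero
    norm_num at h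
    exact h
  have Ssin : Tendsto (fun k : ℕ => (θ (k-1)/2) / Real.sin (θ (k-1)/2)) atTop (nhds 1) := by
    have h := (sinc_lim hθh' hθne').inv₀ one_ne_zero
    norm_num at h
    exact h
  -- θ scaled limits
  have Lθ : Tendsto (fun k : ℕ => θ k * ((k:ℝ)*Real.sqrt (k:ℝ))) atTop (nhds (Real.sqrt 2/4)) := by
    have h := ((Tsin.mul Asin).mul (L1.div_const 2)).const_mul (Real.sqrt 2)
    rw [show Real.sqrt 2 * (1*1 * (1/2/2)) = Real.sqrt 2/4 by ring] at h
    apply h.congr'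
    filter_upwards [eventually_ge_atTop 1] with k hk
    have hδp := hδpos k hk
    have hδ1 := hδlt1 k hk
    have hsA : 0 < Real.sin (δ k/2) :=
      Real.sin_pos_of_pos_of_lt_pi (by linarith) (by linarith)
    rw [hθ k hk]
    have h2 : Real.sqrt 2 ≠ 0 := by positivity
    field_simp
  have Lθ' : Tendsto (fun k : ℕ => θ (k-1) * ((k:ℝ)*Real.sqrt (k:ℝ))) atTop (nhds (Real.sqrt 2/4)) := by
    have h := ((Ssin.mul Bsin).mul (L2.div_const 2)).const_mul (Real.sqrt 2)
    rw [show Real.sqrt 2 * (1*1 * (1/2/2)) = Real.sqrt 2/4 by ring] at h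
    apply h.congr'
    filter_upwards [eventually_ge_atTop 2] with k hk
    have hδp := hδpos (k-1) (by omega)
    have hδ1 := hδlt1 (k-1) (by omega)
    have hsA : 0 < Real.sin (δ (k-1)/2) :=
      Real.sin_pos_of_pos_of_lt_pi (by linarith) (by linarith)
    rw [hθ (k-1) (by omega)]
    have h2 : Real.sqrt 2 ≠ 0 := by positivity
    field_simp
  -- pointwise structure facts at each k ≥ 2
  have hstruct : ∀ k : ℕ, 2 ≤ k →
      f k = Real.sqrt 2 * (Real.sin (δ (k-1)/2 + δ k/2) * Real.sin (δ (k-1)/2 - δ k/2)) /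
        (2*(Real.cos (δ k/2)*Real.cos (θ (k-1)/2) + Real.cos (θ k/2)*Real.cos (δ (k-1)/2)))
      ∧ 0 < Real.cos (δ k/2)*Real.cos (θ (k-1)/2) + Real.cos (θ k/2)*Real.cos (δ (k-1)/2)
      ∧ 0 < f k ∧ 0 < g k ∧ g k = Real.sin (θ k/2 + θ (k-1)/2) := by
    intro k hk
    obtain ⟨hd1, hd2, hd3⟩ := hKfacts k hk
    have h1 : 1 ≤ k := by omega
    have h1' : 1 ≤ k-1 := by omega
    obtain ⟨ht1, ht2⟩ := hθmem k h1
    obtain ⟨hs1', hs2'⟩ := hθmem (k-1) h1'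
    have hδp' : 0 < δ (k-1) := lt_trans hd1 hd2
    have hcA : 0 < Real.cos (δ k/2) := Real.cos_pos_of_mem_Ioo ⟨by linarith, by linarith⟩
    have hcB : 0 < Real.cos (δ (k-1)/2) := Real.cos_pos_of_mem_Ioo ⟨by linarith, by linarith⟩
    have hcT : 0 < Real.cos (θ k/2) := Real.cos_pos_of_mem_Ioo ⟨by linarith, by linarith⟩
    have hcS : 0 < Real.cos (θ (k-1)/2) := Real.cos_pos_of_mem_Ioo ⟨by linarith, by linarith⟩
    have hD : 0 < Real.cos (δ k/2)*Real.cos (θ (k-1)/2) + Real.cos (θ k/2)*Real.cos (δ (k-1)/2) :=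
      add_pos (mul_pos hcA hcS) (mul_pos hcT hcB)
    have e1 : Real.sin (δ (k-1)/2 + δ k/2) * Real.sin (δ (k-1)/2 - δ k/2)
        = Real.sin (δ (k-1)/2)^2 - Real.sin (δ k/2)^2 := by
      rw [Real.sin_add, Real.sin_sub]
      linear_combination (Real.sin (δ (k-1)/2))^2 * Real.sin_sq_add_cos_sq (δ k/2)
        - (Real.sin (δ k/2))^2 * Real.sin_sq_add_cos_sq (δ (k-1)/2)
    have h2 : Real.sqrt 2^2 = 2 := Real.sq_sqrt (by norm_num)
    have ht := hθ k h1
    have hs := hθ (k-1) h1'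
    have e2 : Real.cos (θ k/2)^2 = 1 - Real.sin (δ k/2)^2/2 := by
      linear_combination Real.sin_sq_add_cos_sq (θ k/2)
        - (Real.sin (θ k/2) + Real.sqrt 2/2*Real.sin (δ k/2))*ht
        - (Real.sin (δ k/2)^2/4)*h2
    have e3 : Real.cos (θ (k-1)/2)^2 = 1 - Real.sin (δ (k-1)/2)^2/2 := by
      linear_combination Real.sin_sq_add_cos_sq (θ (k-1)/2)
        - (Real.sin (θ (k-1)/2) + Real.sqrt 2/2*Real.sin (δ (k-1)/2))*hs
        - (Real.sin (δ (k-1)/2)^2/4)*h2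
    have hfk : f k = Real.sqrt 2 * (Real.sin (δ (k-1)/2 + δ k/2) * Real.sin (δ (k-1)/2 - δ k/2)) /
        (2*(Real.cos (δ k/2)*Real.cos (θ (k-1)/2) + Real.cos (θ k/2)*Real.cos (δ (k-1)/2))) := by
      rw [hf k hk, eq_div_iff (by positivity), e1]
      linear_combination (Real.sqrt 2)*(2*Real.cos (δ k/2)^2*e3 - 2*Real.cos (δ (k-1)/2)^2*e2
        + (2-Real.sin (δ (k-1)/2)^2)*Real.sin_sq_add_cos_sq (δ k/2)
        - (2-Real.sin (δ k/2)^2)*Real.sin_sq_add_cos_sq (δ (k-1)/2))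
    have hsP : 0 < Real.sin (δ (k-1)/2 + δ k/2) :=
      Real.sin_pos_of_pos_of_lt_pi (by linarith) (by linarith)
    have hsQ : 0 < Real.sin (δ (k-1)/2 - δ k/2) :=
      Real.sin_pos_of_pos_of_lt_pi (by linarith) (by linarith)
    have hfpos : 0 < f k := by
      rw [hfk]
      have h20 : 0 < Real.sqrt 2 := by positivity
      apply div_pos (mul_pos h20 (mul_pos hsP hsQ)) (by linarith)
    have hgk : g k = Real.sin (θ k/2 + θ (k-1)/2) := by
      rw [hg k hk, Real.sin_add]
    have hgpos : 0 < g k := by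
      rw [hgk]
      exact Real.sin_pos_of_pos_of_lt_pi (by linarith) (by linarith)
    exact ⟨hfk, hD, hfpos, hgpos, hgk⟩
  have hgpos_ev : ∀ᶠ k in atTop, 0 < g k :=
    eventually_atTop.2 ⟨2, fun k hk => (hstruct k hk).2.2.2.1⟩
  have hfpos_ev : ∀ᶠ k in atTop, 0 < f k :=
    eventually_atTop.2 ⟨2, fun k hk => (hstruct k hk).2.2.1⟩
  -- Lg
  have hZ0 : Tendsto (fun k : ℕ => θ k/2 + θ (k-1)/2) atTop (nhds 0) := by
    have h := hθh.add hθh'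
    rw [add_zero] at h
    exact h
  have hZne : ∀ᶠ k in atTop, θ k/2 + θ (k-1)/2 ≠ 0 := by
    filter_upwards [eventually_ge_atTop 2] with k hk
    have h1 := (hθmem k (by omega)).1
    have h2 := (hθmem (k-1) (by omega)).1
    positivity
  have Zsin := sinc_lim hZ0 hZne
  have Lg : Tendsto (fun k : ℕ => g k * ((k:ℝ)*Real.sqrt (k:ℝ))) atTop (nhds (Real.sqrt 2/4)) := by
    have h := Zsin.mul ((Lθ.add Lθ').div_const 2)
    rw [show (1:ℝ) * ((Real.sqrt 2/4 + Real.sqrt 2/4)/2) = Real.sqrt 2/4 by ring] at h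
    apply h.congr'
    filter_upwards [eventually_ge_atTop 2, hZne] with k hk hz
    obtain ⟨_, _, _, _, hgk⟩ := hstruct k hk
    rw [hgk, show (θ k*((k:ℝ)*Real.sqrt (k:ℝ)) + θ (k-1)*((k:ℝ)*Real.sqrt (k:ℝ)))/2
      = (θ k/2 + θ (k-1)/2) * ((k:ℝ)*Real.sqrt (k:ℝ)) by ring]
    exact cancel1 hz
  -- LD
  have LD : Tendsto (fun k : ℕ => Real.cos (δ k/2)*Real.cos (θ (k-1)/2)
      + Real.cos (θ k/2)*Real.cos (δ (k-1)/2)) atTop (nhds 2) := by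
    have c1 : Tendsto (fun k : ℕ => Real.cos (δ k/2)) atTop (nhds 1) := by
      simpa [Function.comp_def] using (Real.continuous_cos.tendsto 0).comp hδh
    have c2 : Tendsto (fun k : ℕ => Real.cos (δ (k-1)/2)) atTop (nhds 1) := by
      simpa [Function.comp_def] using (Real.continuous_cos.tendsto 0).comp hδh'
    have c3 : Tendsto (fun k : ℕ => Real.cos (θ k/2)) atTop (nhds 1) := by
      simpa [Function.comp_def] using (Real.continuous_cos.tendsto 0).comp hθh
    have c4 : Tendsto (fun k : ℕ => Real.cos (θ (k-1)/2)) atTop (nhds 1) := by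
      simpa [Function.comp_def] using (Real.continuous_cos.tendsto 0).comp hθh'
    have h := (c1.mul c4).add (c3.mul c2)
    norm_num at h
    exact h
  -- P, Q
  have LP : Tendsto (fun k : ℕ => (δ (k-1)/2 + δ k/2) * ((k:ℝ)*Real.sqrt (k:ℝ)))
      atTop (nhds (1/2)) := by
    have h := (L2.add L1).div_const 2
    norm_num at h
    apply h.congr fun k => by ring
  have LQ : Tendsto (fun k : ℕ => (δ (k-1)/2 - δ k/2) * ((k:ℝ)^2*Real.sqrt (k:ℝ)))
      atTop (nhds (3/8)) := by
    have h := L3.div_const 2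
    norm_num at h
    apply h.congr fun k => by ring
  have hP0 : Tendsto (fun k : ℕ => δ (k-1)/2 + δ k/2) atTop (nhds 0) := by
    have h := hδh'.add hδh
    rw [add_zero] at h
    exact h
  have hQ0 : Tendsto (fun k : ℕ => δ (k-1)/2 - δ k/2) atTop (nhds 0) := by
    have h := hδh'.sub hδh
    rw [sub_zero] at h
    exact h
  have hPne : ∀ᶠ k in atTop, δ (k-1)/2 + δ k/2 ≠ 0 := by
    filter_upwards [eventually_ge_atTop 2] with k hk
    obtain ⟨hd1, hd2, _⟩ := hKfacts k hk
    have := lt_trans hd1 hd2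
    positivity
  have hQne : ∀ᶠ k in atTop, δ (k-1)/2 - δ k/2 ≠ 0 := by
    filter_upwards [eventually_ge_atTop 2] with k hk
    obtain ⟨hd1, hd2, _⟩ := hKfacts k hk
    have h0 : 0 < δ (k-1)/2 - δ k/2 := by linarith
    exact h0.ne'
  have Psin := sinc_lim hP0 hPne
  have Qsin := sinc_lim hQ0 hQne
  -- Lf
  have Lf : Tendsto (fun k : ℕ => f k * (((k:ℝ)*Real.sqrt (k:ℝ))*((k:ℝ)^2*Real.sqrt (k:ℝ))))
      atTop (nhds (3*Real.sqrt 2/64)) := by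
    have hc : Tendsto (fun k : ℕ => Real.sqrt 2 / (2*(Real.cos (δ k/2)*Real.cos (θ (k-1)/2)
        + Real.cos (θ k/2)*Real.cos (δ (k-1)/2)))) atTop (nhds (Real.sqrt 2/4)) := by
      have h := (tendsto_const_nhds (x := Real.sqrt 2) (f := atTop (α := ℕ))).div
        (LD.const_mul 2) (by norm_num)
      rw [show Real.sqrt 2/(2*2) = Real.sqrt 2/4 by norm_num] at h
      exact h
    have h := ((hc.mul Psin).mul Qsin).mul (LP.mul LQ)
    rw [show Real.sqrt 2/4 * 1 * 1 * (1/2*(3/8)) = 3*Real.sqrt 2/64 by ring] at h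
    apply h.congr'
    filter_upwards [eventually_ge_atTop 2] with k hk
    obtain ⟨hfk, hD, _, _, _⟩ := hstruct k hk
    obtain ⟨hd1, hd2, _⟩ := hKfacts k hk
    have hPpos : 0 < δ (k-1)/2 + δ k/2 := by linarith
    have hQpos : 0 < δ (k-1)/2 - δ k/2 := by linarith
    rw [hfk]
    exact cancel2 hPpos.ne' hQpos.ne' (by positivity)
  -- 1/M2 → 0
  have hM2inv : Tendsto (fun k : ℕ => 1/((k:ℝ)^2*Real.sqrt (k:ℝ))) atTop (nhds 0) := by
    apply squeeze_zero' ?_ ?_ tendsto_one_div_atTop_nhds_zero_nat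
    · filter_upwards [eventually_ge_atTop 1] with k hk
      positivity
    · filter_upwards [eventually_ge_atTop 1] with k hk
      have hk1 : (1:ℝ) ≤ (k:ℝ) := by exact_mod_cast hk
      have hs1 : (1:ℝ) ≤ Real.sqrt (k:ℝ) := by
        rw [show (1:ℝ) = Real.sqrt 1 from Real.sqrt_one.symm]
        exact Real.sqrt_le_sqrt hk1
      apply one_div_le_one_div_of_le (by linarith)
      nlinarith
  have hsqrt24 : (0:ℝ) < Real.sqrt 2/4 := by positivity
  -- s * M2 → 3/16
  have hF3 : Tendsto (fun k : ℕ => g k / Real.sqrt (g k^2 + f k^2)) atTop (nhds 1) := by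
    have hfg : Tendsto (fun k : ℕ => f k / g k) atTop (nhds 0) := by
      have h := (Lf.div Lg hsqrt24.ne').mul hM2inv
      norm_num at h
      apply h.congr'
      filter_upwards [eventually_ge_atTop 1, hgpos_ev] with k hk hgk
      have hk1 : (1:ℝ) ≤ (k:ℝ) := by exact_mod_cast hk
      have hsk : 0 < Real.sqrt (k:ℝ) := Real.sqrt_pos.mpr (by linarith)
      field_simp
    have hc : ContinuousAt (fun r : ℝ => 1/Real.sqrt (1+r^2)) 0 := by
      apply ContinuousAt.div continuousAt_const (by fun_prop)
      norm_num
    have h := hc.tendsto.comp hfg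
    norm_num at h
    apply h.congr'
    filter_upwards [hgpos_ev] with k hgk
    have e : 1 + (f k/g k)^2 = (g k^2 + f k^2)/(g k)^2 := by
      field_simp
    simp only [Function.comp_apply]
    rw [e, Real.sqrt_div (by positivity), Real.sqrt_sq hgk.le, inv_div]
  have hsM : Tendsto (fun k : ℕ => (f k / Real.sqrt (g k^2 + f k^2)) * ((k:ℝ)^2*Real.sqrt (k:ℝ)))
      atTop (nhds (3/16)) := by
    have h := (Lf.div Lg hsqrt24.ne').mul hF3
    have hv : 3*Real.sqrt 2/64/(Real.sqrt 2/4)*1 = 3/16 := by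
      have h2 : Real.sqrt 2 ≠ 0 := by positivity
      field_simp
      ring
    rw [hv] at h
    apply h.congr'
    filter_upwards [eventually_ge_atTop 1, hgpos_ev, hfpos_ev] with k hk hgk hfk
    have hk1 : (1:ℝ) ≤ (k:ℝ) := by exact_mod_cast hk
    have hsk : 0 < Real.sqrt (k:ℝ) := Real.sqrt_pos.mpr (by linarith)
    have hroot : 0 < Real.sqrt (g k^2 + f k^2) := Real.sqrt_pos.mpr (by positivity)
    simp only [Pi.div_apply]
    field_simp
  have hs_pos : ∀ᶠ k in atTop, 0 < f k / Real.sqrt (g k^2 + f k^2) := by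
    filter_upwards [hgpos_ev, hfpos_ev] with k hgk hfk
    have hroot : 0 < Real.sqrt (g k^2 + f k^2) := Real.sqrt_pos.mpr (by positivity)
    positivity
  have hs0 : Tendsto (fun k : ℕ => f k / Real.sqrt (g k^2 + f k^2)) atTop (nhds 0) := by
    have h := hsM.mul hM2inv
    norm_num at h
    apply h.congr'
    filter_upwards [eventually_ge_atTop 1] with k hk
    have hk1 : (1:ℝ) ≤ (k:ℝ) := by exact_mod_cast hk
    have hsk : (0:ℝ) < Real.sqrt (k:ℝ) := Real.sqrt_pos.mpr (by linarith)
    have h1 : ((k:ℝ)^2*Real.sqrt (k:ℝ)) * ((Real.sqrt (k:ℝ))⁻¹ * (((k:ℝ)^2)⁻¹)) = 1 := by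
      field_simp
    rw [mul_assoc, h1, mul_one]
  have harc := arcsinc_lim hs0 (hs_pos.mono fun k h => h.ne')
  have hfinal := harc.mul hsM
  norm_num at hfinal
  apply hfinal.congr'
  filter_upwards [eventually_ge_atTop 2, hs_pos] with k hk hsk
  have hk0 : (0:ℝ) < (k:ℝ) := by exact_mod_cast Nat.lt_of_lt_of_le Nat.zero_lt_two hk
  have hM2k : ((k:ℝ))^((5:ℝ)/2) = (k:ℝ)^2*Real.sqrt (k:ℝ) := by
    rw [show (5:ℝ)/2 = 2 + 1/2 by norm_num, Real.rpow_add hk0, ← Real.sqrt_eq_rpow,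
      show (2:ℝ) = ((2:ℕ):ℝ) by norm_num, Real.rpow_natCast]
  rw [hσ k hk, hM2k, cancel1 hsk.ne', mul_comm]
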